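/- arXiv:0807.4894 — 3 statements merged into one kernel-verified Lean document; each statement's English description precedes it below -/
import Mathlib

section
/- Deformed Whitney sum formula (Theorem 6.3, abstract form): let f, g : ℤ → A satisfy f_r = 0 for r > n and g_r = 0 for r > m, define the convolution h_r := ∑_{l∈ℤ} f_l·g_{r−l} (a finite sum), and define the transforms F_r := ∑_{k≥0} f_{r+k}·a_k, G_r := ∑_{k≥0} g_{r+k}·a_k, H_r := ∑_{k≥0} h_{r+k}·a_k. Then for every integer r one has H_r = ∑_{i,j,k≥0, l∈ℤ} F_{l+i}·G_{r−l+k+j}·b_i·b_j·a_k, where the sum on the right is finite (F_s = 0 for s > n and G_s = 0 for s > m). -/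
open Finset

private lemma square_to_triangle {M : Type*} [AddCommMonoid M] (c : ℕ → ℕ → M) (P : ℕ)
    (hc : ∀ i k, P ≤ i + k → c i k = 0) :
    ∑ i ∈ Finset.range P, ∑ k ∈ Finset.range P, c i k
      = ∑ t ∈ Finset.range P, ∑ p ∈ Finset.HasAntidiagonal.antidiagonal t, c p.1 p.2 := by
  have hdisj : (↑(Finset.range P) : Set ℕ).PairwiseDisjoint Finset.HasAntidiagonal.antidiagonal := by
    intro x _ y _ hxy
    simp only [Finset.disjoint_left]
    intro p hp hp'
    rw [Finset.HasAntidiagonal.mem_antidiagonal] at hp hp'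
    exact hxy (hp ▸ hp')
  have h1 : ∑ t ∈ Finset.range P, ∑ p ∈ Finset.HasAntidiagonal.antidiagonal t, c p.1 p.2
      = ∑ p ∈ (Finset.range P).biUnion Finset.HasAntidiagonal.antidiagonal, c p.1 p.2 :=
    (Finset.sum_biUnion hdisj).symm
  have hsub : (Finset.range P).biUnion Finset.HasAntidiagonal.antidiagonal ⊆ Finset.range P ×ˢ Finset.range P := by
    intro p hp
    simp only [Finset.mem_biUnion, Finset.mem_range, Finset.HasAntidiagonal.mem_antidiagonal] at hp
    obtain ⟨t, ht, hpt⟩ := hp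
    simp only [Finset.mem_product, Finset.mem_range]
    omega
  have h2 : ∑ p ∈ (Finset.range P).biUnion Finset.HasAntidiagonal.antidiagonal, c p.1 p.2
      = ∑ p ∈ Finset.range P ×ˢ Finset.range P, c p.1 p.2 := by
    apply Finset.sum_subset hsub
    intro p _ hnp
    simp only [Finset.mem_biUnion, Finset.mem_range, Finset.HasAntidiagonal.mem_antidiagonal] at hnp
    push_neg at hnp
    apply hc
    by_contra hlt
    exact hnp (p.1 + p.2) (by omega) rfl
  rw [h1, h2, Finset.sum_product]

private lemma inversion_aux {R : Type*} [CommRing R] {A : Type*} [CommRing A] [Algebra R A]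
    (a b : ℕ → R) (hab : PowerSeries.mk a * PowerSeries.mk b = 1)
    (n : ℤ) (f : ℤ → A) (hf : ∀ r : ℤ, n < r → f r = 0)
    (F : ℤ → A) (hF : ∀ r : ℤ, F r = ∑ᶠ k : ℕ, a k • f (r + (k : ℤ)))
    (s : ℤ) (P : ℕ) (hP0 : 0 < P) (hP : n - s < (P : ℤ)) :
    ∑ i ∈ Finset.range P, b i • F (s + (i : ℤ)) = f s := by
  have hcoef : ∀ t : ℕ, ∑ p ∈ Finset.HasAntidiagonal.antidiagonal t, b p.1 * a p.2
      = if t = 0 then (1 : R) else 0 := by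
    intro t
    have h1 := congrArg (PowerSeries.coeff t) hab
    rw [PowerSeries.coeff_mul, PowerSeries.coeff_one] at h1
    simp only [PowerSeries.coeff_mk] at h1
    rw [← h1, ← Finset.Nat.sum_antidiagonal_swap (f := fun p => a p.1 * b p.2)]
    exact Finset.sum_congr rfl (fun p _ => mul_comm _ _)
  calc ∑ i ∈ Finset.range P, b i • F (s + (i : ℤ))
      = ∑ i ∈ Finset.range P, ∑ k ∈ Finset.range P,
          (b i * a k) • f (s + ((i + k : ℕ) : ℤ)) := by
        apply Finset.sum_congr rfl
        intro i _
        have hFi : F (s + (i : ℤ)) = ∑ k ∈ Finset.range P, a k • f (s + (i : ℤ) + (k : ℤ)) := by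
          rw [hF]
          apply finsum_eq_sum_of_support_subset
          intro k hk
          simp only [Function.mem_support] at hk
          simp only [Finset.coe_range, Set.mem_Iio]
          by_contra h'
          push_neg at h'
          exact hk (by rw [hf _ (by push_cast; omega), smul_zero])
        rw [hFi, Finset.smul_sum]
        apply Finset.sum_congr rfl
        intro k _
        rw [smul_smul]
        have harg : s + (i : ℤ) + (k : ℤ) = s + ((i + k : ℕ) : ℤ) := by push_cast; ring
        rw [harg]
    _ = ∑ t ∈ Finset.range P, ∑ p ∈ Finset.HasAntidiagonal.antidiagonal t,
          (b p.1 * a p.2) • f (s + ((p.1 + p.2 : ℕ) : ℤ)) := by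
        apply square_to_triangle (c := fun i k => (b i * a k) • f (s + ((i + k : ℕ) : ℤ)))
        intro i k hik
        rw [hf _ (by push_cast; omega), smul_zero]
    _ = ∑ t ∈ Finset.range P, (if t = 0 then (1 : R) else 0) • f (s + (t : ℤ)) := by
        apply Finset.sum_congr rfl
        intro t _
        have : ∀ p ∈ Finset.HasAntidiagonal.antidiagonal t,
            (b p.1 * a p.2) • f (s + ((p.1 + p.2 : ℕ) : ℤ))
              = (b p.1 * a p.2) • f (s + (t : ℤ)) := by
          intro p hp
          rw [Finset.HasAntidiagonal.mem_antidiagonal] at hp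
          rw [hp]
        rw [Finset.sum_congr rfl this, ← Finset.sum_smul, hcoef]
    _ = f s := by
        rw [Finset.sum_eq_single_of_mem 0 (Finset.mem_range.2 hP0)]
        · simp
        · intro t _ htne
          simp [htne]
/-- **Deformed Whitney sum formula** (Theorem 6.3, abstract form). Let `R` be a
commutative ring, `a, b : ℕ → R` with `a 0 = 1` and `(∑ a_k x^k)·(∑ b_k x^k) = 1` in
`R⟦x⟧`, `A` a commutative `R`-algebra and `n, m : ℤ`. Suppose `f, g : ℤ → A` satisfy
`f r = 0` for `r > n` and `g r = 0` for `r > m`; let `h` be their convolution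
`h r = ∑_{l ∈ ℤ} f l · g (r - l)` (a finite sum), and let `F, G, H` be the transforms
`F r = ∑_{k ≥ 0} f (r+k) · a k`, etc. Then for every `r : ℤ`,
`H r = ∑_{i,j,k ≥ 0, l ∈ ℤ} F (l+i) · G (r-l+k+j) · b i · b j · a k`,
the right-hand sum being finite since `F s = 0` for `s > n` and `G s = 0` for `s > m`. -/
theorem deformed_whitney_abstract {R : Type*} [CommRing R]
    {A : Type*} [CommRing A] [Algebra R A]
    (a b : ℕ → R) (ha : a 0 = 1)
    (hab : PowerSeries.mk a * PowerSeries.mk b = 1)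
    (n m : ℤ) (f g : ℤ → A)
    (hf : ∀ r : ℤ, n < r → f r = 0) (hg : ∀ r : ℤ, m < r → g r = 0)
    (h : ℤ → A) (hh : ∀ r : ℤ, h r = ∑ᶠ l : ℤ, f l * g (r - l))
    (F : ℤ → A) (hF : ∀ r : ℤ, F r = ∑ᶠ k : ℕ, a k • f (r + (k : ℤ)))
    (G : ℤ → A) (hG : ∀ r : ℤ, G r = ∑ᶠ k : ℕ, a k • g (r + (k : ℤ)))
    (H : ℤ → A) (hH : ∀ r : ℤ, H r = ∑ᶠ k : ℕ, a k • h (r + (k : ℤ))) :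
    ∀ r : ℤ, H r =
      ∑ᶠ (l : ℤ) (i : ℕ) (j : ℕ) (k : ℕ),
        (b i * b j * a k) • (F (l + (i : ℤ)) * G (r - l + (k : ℤ) + (j : ℤ))) := by
  intro r
  set P : ℕ := (n + m - r).toNat + 1 with hPdef
  have hP0 : 0 < P := Nat.succ_pos _
  have hPbig : n + m - r < (P : ℤ) := by omega
  set L : Finset ℤ := Finset.Icc (r - m) n with hLdef
  have hF0 : ∀ s : ℤ, n < s → F s = 0 := by
    intro s hs
    rw [hF]
    apply finsum_eq_zero_of_forall_eq_zero
    intro k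
    rw [hf _ (by omega), smul_zero]
  have hG0 : ∀ s : ℤ, m < s → G s = 0 := by
    intro s hs
    rw [hG]
    apply finsum_eq_zero_of_forall_eq_zero
    intro k
    rw [hg _ (by omega), smul_zero]
  have hh0 : ∀ s : ℤ, n + m < s → h s = 0 := by
    intro s hs
    rw [hh]
    apply finsum_eq_zero_of_forall_eq_zero
    intro l
    rcases le_or_gt l n with hl | hl
    · rw [hg _ (by omega), mul_zero]
    · rw [hf _ hl, zero_mul]
  -- notation for the atom
  set atom : ℤ → ℕ → ℕ → ℕ → A := fun l i j k =>
    (b i * b j * a k) • (F (l + (i : ℤ)) * G (r - l + (k : ℤ) + (j : ℤ))) with hatom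
  -- Step R1: outer finsum to Finset sum over L
  have hR1 : ∑ᶠ (l : ℤ) (i : ℕ) (j : ℕ) (k : ℕ), atom l i j k
      = ∑ l ∈ L, ∑ᶠ (i : ℕ) (j : ℕ) (k : ℕ), atom l i j k := by
    apply finsum_eq_sum_of_support_subset
    intro l hl
    simp only [Function.mem_support] at hl
    simp only [hLdef, Finset.coe_Icc, Set.mem_Icc]
    by_contra h'
    push_neg at h'
    apply hl
    apply finsum_eq_zero_of_forall_eq_zero; intro i
    apply finsum_eq_zero_of_forall_eq_zero; intro j
    apply finsum_eq_zero_of_forall_eq_zero; intro k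
    rcases le_or_gt (r - m) l with hcase | hcase
    · -- then n < l
      rw [hatom]
      simp only
      rw [hF0 _ (by specialize h' hcase; omega), zero_mul, smul_zero]
    · rw [hatom]
      simp only
      rw [hG0 _ (by omega), mul_zero, smul_zero]
  -- Step R2: inner finsums to Finset sums over range P, for l ∈ L
  have hR2 : ∀ l ∈ L, (∑ᶠ (i : ℕ) (j : ℕ) (k : ℕ), atom l i j k)
      = ∑ i ∈ Finset.range P, ∑ j ∈ Finset.range P, ∑ k ∈ Finset.range P, atom l i j k := by
    intro l hl
    simp only [hLdef, Finset.mem_Icc] at hl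
    rw [finsum_eq_sum_of_support_subset _ (s := Finset.range P) (by
      intro i hi
      simp only [Function.mem_support] at hi
      simp only [Finset.coe_range, Set.mem_Iio]
      by_contra h'
      push_neg at h'
      apply hi
      apply finsum_eq_zero_of_forall_eq_zero; intro j
      apply finsum_eq_zero_of_forall_eq_zero; intro k
      rw [hatom]; simp only
      rw [hF0 _ (by omega), zero_mul, smul_zero])]
    apply Finset.sum_congr rfl
    intro i _
    rw [finsum_eq_sum_of_support_subset _ (s := Finset.range P) (by
      intro j hj
      simp only [Function.mem_support] at hj
      simp only [Finset.coe_range, Set.mem_Iio]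
      by_contra h'
      push_neg at h'
      apply hj
      apply finsum_eq_zero_of_forall_eq_zero; intro k
      rw [hatom]; simp only
      rw [hG0 _ (by omega), mul_zero, smul_zero])]
    apply Finset.sum_congr rfl
    intro j _
    rw [finsum_eq_sum_of_support_subset _ (s := Finset.range P) (by
      intro k hk
      simp only [Function.mem_support] at hk
      simp only [Finset.coe_range, Set.mem_Iio]
      by_contra h'
      push_neg at h'
      apply hk
      rw [hatom]; simp only
      rw [hG0 _ (by omega), mul_zero, smul_zero])]
  -- Step R3: evaluate the triple Finset sum for l ∈ L
  have hR3 : ∀ l ∈ L,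
      (∑ i ∈ Finset.range P, ∑ j ∈ Finset.range P, ∑ k ∈ Finset.range P, atom l i j k)
      = ∑ k ∈ Finset.range P, a k • (f l * g (r + (k : ℤ) - l)) := by
    intro l hl
    simp only [hLdef, Finset.mem_Icc] at hl
    have step1 : ∀ i ∈ Finset.range P, ∑ j ∈ Finset.range P, ∑ k ∈ Finset.range P, atom l i j k
        = ∑ k ∈ Finset.range P, ∑ j ∈ Finset.range P, atom l i j k := by
      intro i _
      exact Finset.sum_comm
    rw [Finset.sum_congr rfl step1, Finset.sum_comm]
    apply Finset.sum_congr rfl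
    intro k _
    have expand : ∀ i ∈ Finset.range P, ∀ j ∈ Finset.range P,
        atom l i j k = a k • ((b i • F (l + (i : ℤ))) * (b j • G ((r + (k : ℤ) - l) + (j : ℤ)))) := by
      intro i _ j _
      rw [hatom]; simp only
      have harg : r - l + (k : ℤ) + (j : ℤ) = (r + (k : ℤ) - l) + (j : ℤ) := by ring
      rw [harg, smul_mul_smul_comm, smul_smul]
      congr 1
      ring
    calc ∑ i ∈ Finset.range P, ∑ j ∈ Finset.range P, atom l i j k
        = ∑ i ∈ Finset.range P, ∑ j ∈ Finset.range P,
            a k • ((b i • F (l + (i : ℤ))) * (b j • G ((r + (k : ℤ) - l) + (j : ℤ)))) := by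
          apply Finset.sum_congr rfl
          intro i hi
          exact Finset.sum_congr rfl (fun j hj => expand i hi j hj)
      _ = a k • ((∑ i ∈ Finset.range P, b i • F (l + (i : ℤ)))
            * (∑ j ∈ Finset.range P, b j • G ((r + (k : ℤ) - l) + (j : ℤ)))) := by
          rw [Finset.sum_mul_sum, Finset.smul_sum]
          apply Finset.sum_congr rfl
          intro i _
          rw [Finset.smul_sum]
      _ = a k • (f l * g (r + (k : ℤ) - l)) := by
          rw [inversion_aux a b hab n f hf F hF l P hP0 (by omega),
            inversion_aux a b hab m g hg G hG (r + (k : ℤ) - l) P hP0 (by omega)]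
  -- Step H: evaluate H r
  have hHstep : H r = ∑ k ∈ Finset.range P, ∑ l ∈ L, a k • (f l * g (r + (k : ℤ) - l)) := by
    rw [hH]
    rw [finsum_eq_sum_of_support_subset _ (s := Finset.range P) (by
      intro k hk
      simp only [Function.mem_support] at hk
      simp only [Finset.coe_range, Set.mem_Iio]
      by_contra h'
      push_neg at h'
      exact hk (by rw [hh0 _ (by omega), smul_zero]))]
    apply Finset.sum_congr rfl
    intro k _
    have : h (r + (k : ℤ)) = ∑ l ∈ L, f l * g (r + (k : ℤ) - l) := by
      rw [hh]
      apply finsum_eq_sum_of_support_subset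
      intro l hl
      simp only [Function.mem_support] at hl
      simp only [hLdef, Finset.coe_Icc, Set.mem_Icc]
      constructor
      · by_contra h'
        push_neg at h'
        exact hl (by rw [hg _ (by omega), mul_zero])
      · by_contra h'
        push_neg at h'
        exact hl (by rw [hf _ h', zero_mul])
    rw [this, Finset.smul_sum]
  rw [hHstep, hR1, Finset.sum_congr rfl hR2, Finset.sum_congr rfl hR3, Finset.sum_comm]
end

section
/- Deformed Whitney sum formula for the classes Q (Theorem 6.3, concrete form): for all n, m ≥ 1 and every integer r, one has Q_r(t_1,…,t_{n+m}) = ∑_{i,j,k≥0, l∈ℤ} Q_{l+i}(t_1,…,t_n)·Q_{r−l+k+j}(t_{n+1},…,t_{n+m})·b_i·b_j·a_k in R⟦t_1,…,t_{n+m}⟧, where the sum is finite because Q_s(t_1,…,t_n) = 0 for s > n and Q_s(t_{n+1},…,t_{n+m}) = 0 for s > m. -/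
open Finset

variable {R : Type*} [CommRing R] {σ : Type*} [DecidableEq σ]

/-- The power series `F(t, t_i)` viewed as a power series in `t` with coefficients in
`R⟦t_j : j ∈ σ⟧`, where `F(u,v) = ∑ c i j • u^i v^j`. -/
noncomputable def Fser (c : ℕ → ℕ → R) (i : σ) : PowerSeries (MvPowerSeries σ R) :=
  PowerSeries.mk fun p =>
    (fun d => if d = Finsupp.single i (d i) then c p (d i) else 0 : MvPowerSeries σ R)

/-- The class `Φ_r(t_i : i ∈ s)`: for `r ≤ card s` it is the coefficient of
`t^(card s - r)` in `∏_{i ∈ s} F(t, t_i)`, and `0` for `r > card s`. -/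
noncomputable def PhiCl (c : ℕ → ℕ → R) (s : Finset σ) (r : ℤ) : MvPowerSeries σ R :=
  if r ≤ (s.card : ℤ) then
    PowerSeries.coeff ((s.card : ℤ) - r).toNat (∏ i ∈ s, Fser c i)
  else 0

/-- The class `Q_r(t_i : i ∈ s) = ∑_{k=0}^{card s - r} Φ_{r+k} · a_k` for `r ≤ card s`,
and `0` for `r > card s`. -/
noncomputable def QCl (c : ℕ → ℕ → R) (a : ℕ → R) (s : Finset σ) (r : ℤ) :
    MvPowerSeries σ R :=
  if r ≤ (s.card : ℤ) then
    ∑ k ∈ Finset.range (((s.card : ℤ) - r).toNat + 1),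
      MvPowerSeries.C (σ := σ) (R := R) (a k) * PhiCl c s (r + (k : ℤ))
  else 0

/-- The elementary symmetric power series in the variables `t_i`, `i ∈ s`. -/
noncomputable def esymmS (R : Type*) [CommRing R] (s : Finset σ) (r : ℕ) :
    MvPowerSeries σ R :=
  ∑ u ∈ s.powersetCard r, ∏ i ∈ u, MvPowerSeries.X i

section aux

variable (c : ℕ → ℕ → R) (a b : ℕ → R)

/-- The ℕ-indexed coefficient version of `PhiCl`. -/
noncomputable def psiCl (s : Finset σ) (p : ℕ) : MvPowerSeries σ R :=
  PowerSeries.coeff p (∏ i ∈ s, Fser c i)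

lemma phiCl_eq_psi {s : Finset σ} {r : ℤ} (h : r ≤ (s.card : ℤ)) :
    PhiCl c s r = psiCl c s ((s.card : ℤ) - r).toNat := if_pos h

lemma phiCl_of_gt {s : Finset σ} {r : ℤ} (h : (s.card : ℤ) < r) : PhiCl c s r = 0 :=
  if_neg (not_le.2 h)

lemma psi_eq_phi (s : Finset σ) (p : ℕ) :
    psiCl c s p = PhiCl c s ((s.card : ℤ) - p) := by
  have h2 : ((s.card : ℤ) - ((s.card : ℤ) - (p : ℤ))).toNat = p := by omega
  rw [phiCl_eq_psi c (by omega), h2]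

lemma qCl_of_gt {s : Finset σ} {r : ℤ} (h : (s.card : ℤ) < r) : QCl c a s r = 0 :=
  if_neg (not_le.2 h)

/-- `Q` expanded in `Φ`, with flexible summation range. -/
lemma qCl_eq_sum {s : Finset σ} {r : ℤ} {K : ℕ} (hK : (s.card : ℤ) - r ≤ (K : ℤ)) :
    QCl c a s r = ∑ k ∈ Finset.range (K + 1),
      MvPowerSeries.C (σ := σ) (R := R) (a k) * PhiCl c s (r + (k : ℤ)) := by
  by_cases h : r ≤ (s.card : ℤ)
  · rw [QCl, if_pos h]
    refine Finset.sum_subset (Finset.range_subset_range.2 (by omega)) ?_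
    intro k _ hk
    rw [mem_range] at hk
    rw [phiCl_of_gt c (by omega), mul_zero]
  · rw [QCl, if_neg h]
    refine (Finset.sum_eq_zero fun k _ => ?_).symm
    rw [phiCl_of_gt c (by omega), mul_zero]

end aux

section inv

variable (c : ℕ → ℕ → R) (a b : ℕ → R)
/-- `Φ` expanded back in terms of `Q`, with flexible summation range. -/
lemma phiCl_eq_sum_q (hab : PowerSeries.mk a * PowerSeries.mk b = 1) {s : Finset σ} {r : ℤ} {K : ℕ} (hK : (s.card : ℤ) - r ≤ (K : ℤ)) :
    PhiCl c s r = ∑ k ∈ Finset.range (K + 1),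
      MvPowerSeries.C (σ := σ) (R := R) (b k) * QCl c a s (r + (k : ℤ)) := by
  by_cases h : r ≤ (s.card : ℤ)
  · set N : ℕ := s.card with hN
    set G : PowerSeries (MvPowerSeries σ R) := ∏ i ∈ s, Fser c i with hG
    set Aps : PowerSeries (MvPowerSeries σ R) :=
      PowerSeries.map (MvPowerSeries.C (σ := σ) (R := R)) (PowerSeries.mk a) with hA
    set Bps : PowerSeries (MvPowerSeries σ R) :=
      PowerSeries.map (MvPowerSeries.C (σ := σ) (R := R)) (PowerSeries.mk b) with hB
    have hAB : Aps * Bps = 1 := by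
      rw [hA, hB, ← map_mul, hab, map_one]
    have hcA : ∀ k : ℕ, PowerSeries.coeff k Aps = MvPowerSeries.C (σ := σ) (R := R) (a k) := by
      intro k; rw [hA, PowerSeries.coeff_map, PowerSeries.coeff_mk]
    have hcB : ∀ k : ℕ, PowerSeries.coeff k Bps = MvPowerSeries.C (σ := σ) (R := R) (b k) := by
      intro k; rw [hB, PowerSeries.coeff_map, PowerSeries.coeff_mk]
    have hq : ∀ p : ℕ, PowerSeries.coeff p (Aps * G) = QCl c a s ((N : ℤ) - p) := by
      intro p
      rw [PowerSeries.coeff_mul, Finset.Nat.sum_antidiagonal_eq_sum_range_succ_mk]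
      rw [QCl, if_pos (by omega : (N : ℤ) - p ≤ (s.card : ℤ))]
      have h2 : ((s.card : ℤ) - ((N : ℤ) - p)).toNat = p := by omega
      rw [h2]
      refine Finset.sum_congr rfl fun k hk => ?_
      rw [mem_range] at hk
      rw [hcA, phiCl_eq_psi c (by omega)]
      have h3 : ((s.card : ℤ) - ((N : ℤ) - (p : ℤ) + (k : ℤ))).toNat = p - k := by omega
      rw [h3]; rfl
    have hpsi : ∀ p : ℕ, psiCl c s p =
        ∑ k ∈ Finset.range (p + 1),
          MvPowerSeries.C (σ := σ) (R := R) (b k) * QCl c a s ((N : ℤ) - ((p - k : ℕ) : ℤ)) := by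
      intro p
      have hGB : G = Bps * (Aps * G) := by
        rw [← mul_assoc, mul_comm Bps Aps, hAB, one_mul]
      have : psiCl c s p = PowerSeries.coeff p (Bps * (Aps * G)) := by
        rw [← hGB]; rfl
      rw [this, PowerSeries.coeff_mul, Finset.Nat.sum_antidiagonal_eq_sum_range_succ_mk]
      exact Finset.sum_congr rfl fun k hk => by rw [hcB, hq]
    set p : ℕ := ((N : ℤ) - r).toNat with hp
    have hNp : r = (N : ℤ) - p := by omega
    rw [phiCl_eq_psi c h, ← hN, ← hp, hpsi]
    have hcongr : ∀ k ∈ Finset.range (p + 1),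
        MvPowerSeries.C (σ := σ) (R := R) (b k) * QCl c a s ((N : ℤ) - ((p - k : ℕ) : ℤ)) =
        MvPowerSeries.C (σ := σ) (R := R) (b k) * QCl c a s (r + (k : ℤ)) := by
      intro k hk
      rw [mem_range] at hk
      have harg : (N : ℤ) - ((p - k : ℕ) : ℤ) = r + (k : ℤ) := by omega
      rw [harg]
    rw [Finset.sum_congr rfl hcongr]
    refine Finset.sum_subset (Finset.range_subset_range.2 (by omega)) fun k _ hk => ?_
    rw [mem_range] at hk
    rw [qCl_of_gt c a (by omega), mul_zero]
  · rw [phiCl_of_gt c (by omega)]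
    refine (Finset.sum_eq_zero fun k _ => ?_).symm
    rw [qCl_of_gt c a (by omega), mul_zero]

end inv

section unionsec

variable (c : ℕ → ℕ → R) (a b : ℕ → R)

/-- `Φ` of a disjoint union as a convolution, with flexible lower bound. -/
lemma phiCl_union {s1 s2 : Finset σ} (hd : Disjoint s1 s2) {r lo : ℤ}
    (hlo : lo ≤ r - (s2.card : ℤ)) :
    PhiCl c (s1 ∪ s2) r =
      ∑ l ∈ Finset.Icc lo (s1.card : ℤ), PhiCl c s1 l * PhiCl c s2 (r - l) := by
  have hcard : (s1 ∪ s2).card = s1.card + s2.card := Finset.card_union_of_disjoint hd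
  set N : ℕ := s1.card
  set M : ℕ := s2.card
  by_cases h : r ≤ ((N : ℤ) + (M : ℤ))
  · -- restrict the RHS to `Icc (r - M) N`
    have hsub : Finset.Icc (r - (M : ℤ)) (N : ℤ) ⊆ Finset.Icc lo (N : ℤ) :=
      Finset.Icc_subset_Icc_left hlo
    have hRHS : ∑ l ∈ Finset.Icc lo (N : ℤ), PhiCl c s1 l * PhiCl c s2 (r - l) =
        ∑ l ∈ Finset.Icc (r - (M : ℤ)) (N : ℤ), PhiCl c s1 l * PhiCl c s2 (r - l) := by
      refine (Finset.sum_subset hsub fun l hl hl' => ?_).symm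
      rw [Finset.mem_Icc] at hl
      rw [Finset.mem_Icc] at hl'
      rw [phiCl_of_gt c (s := s2) (by omega), mul_zero]
    rw [hRHS]
    set P : ℕ := ((N : ℤ) + (M : ℤ) - r).toNat with hP
    have hL : PhiCl c (s1 ∪ s2) r = ∑ q ∈ Finset.range (P + 1), psiCl c s1 q * psiCl c s2 (P - q) := by
      rw [phiCl_eq_psi c (by rw [hcard]; push_cast; omega)]
      have : ((((s1 ∪ s2).card : ℕ) : ℤ) - r).toNat = P := by rw [hcard]; push_cast; omega
      rw [this, psiCl, Finset.prod_union hd, PowerSeries.coeff_mul,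
        Finset.Nat.sum_antidiagonal_eq_sum_range_succ_mk]
      rfl
    rw [hL]
    refine Finset.sum_nbij' (fun q => (N : ℤ) - q) (fun l => ((N : ℤ) - l).toNat)
      ?_ ?_ ?_ ?_ ?_
    · intro q hq
      rw [mem_range] at hq
      rw [Finset.mem_Icc]
      omega
    · intro l hl
      rw [Finset.mem_Icc] at hl
      rw [mem_range]
      omega
    · intro q hq
      rw [mem_range] at hq
      omega
    · intro l hl
      rw [Finset.mem_Icc] at hl
      omega
    · intro q hq
      rw [mem_range] at hq
      rw [psi_eq_phi, psi_eq_phi]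
      have e2 : ((s2.card : ℕ) : ℤ) - ((P - q : ℕ) : ℤ) = r - ((N : ℤ) - (q : ℤ)) := by
        omega
      rw [e2]
  · rw [phiCl_of_gt c (by rw [hcard]; push_cast; omega)]
    refine (Finset.sum_eq_zero fun l hl => ?_).symm
    rw [Finset.mem_Icc] at hl
    rw [phiCl_of_gt c (s := s2) (by omega), mul_zero]

end unionsec

section main

variable (c : ℕ → ℕ → R) (a b : ℕ → R)

lemma q_union (hab : PowerSeries.mk a * PowerSeries.mk b = 1)
    {s1 s2 : Finset σ} (hd : Disjoint s1 s2) (r : ℤ) {P : ℕ}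
    (hP : (s1.card : ℤ) + (s2.card : ℤ) - r ≤ (P : ℤ)) :
    QCl c a (s1 ∪ s2) r =
      ∑ l ∈ Finset.Icc (r - (s2.card : ℤ)) ((s1.card : ℤ)),
        ∑ i ∈ Finset.range (P + 1), ∑ j ∈ Finset.range (P + 1),
          ∑ k ∈ Finset.range (P + 1),
            (b i * b j * a k) •
              (QCl c a s1 (l + (i : ℤ)) * QCl c a s2 (r - l + (k : ℤ) + (j : ℤ))) := by
  have hcard : (s1 ∪ s2).card = s1.card + s2.card := Finset.card_union_of_disjoint hd
  set N : ℕ := s1.card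
  set M : ℕ := s2.card
  set L : Finset ℤ := Finset.Icc (r - (M : ℤ)) (N : ℤ) with hL
  -- Step 1 : expand Q in Φ of the union
  rw [qCl_eq_sum c a (by rw [hcard]; push_cast; omega : ((s1 ∪ s2).card : ℤ) - r ≤ (P : ℤ))]
  -- Step 2 : expand Φ of the union as a convolution
  have step2 : ∀ k ∈ Finset.range (P + 1),
      MvPowerSeries.C (σ := σ) (R := R) (a k) * PhiCl c (s1 ∪ s2) (r + (k : ℤ)) =
        ∑ l ∈ L, MvPowerSeries.C (σ := σ) (R := R) (a k) *
          (PhiCl c s1 l * PhiCl c s2 (r + (k : ℤ) - l)) := by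
    intro k _
    rw [phiCl_union c hd (by omega : r - (M : ℤ) ≤ r + (k : ℤ) - (s2.card : ℤ)), Finset.mul_sum]
  rw [Finset.sum_congr rfl step2, Finset.sum_comm]
  -- Step 3 : inside, expand each Φ back in terms of Q
  refine Finset.sum_congr rfl fun l hl => ?_
  rw [hL, Finset.mem_Icc] at hl
  have step3 : ∀ k ∈ Finset.range (P + 1),
      MvPowerSeries.C (σ := σ) (R := R) (a k) * (PhiCl c s1 l * PhiCl c s2 (r + (k : ℤ) - l)) =
        ∑ i ∈ Finset.range (P + 1), ∑ j ∈ Finset.range (P + 1),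
          (b i * b j * a k) •
            (QCl c a s1 (l + (i : ℤ)) * QCl c a s2 (r - l + (k : ℤ) + (j : ℤ))) := by
    intro k hk
    rw [mem_range] at hk
    rw [phiCl_eq_sum_q c a b hab (K := P) (by omega),
      phiCl_eq_sum_q c a b hab (K := P) (by omega : (s2.card : ℤ) - (r + (k : ℤ) - l) ≤ (P : ℤ)),
      Finset.sum_mul_sum, Finset.mul_sum]
    refine Finset.sum_congr rfl fun i _ => ?_
    rw [Finset.mul_sum]
    refine Finset.sum_congr rfl fun j _ => ?_
    rw [MvPowerSeries.smul_eq_C_mul, map_mul, map_mul]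
    have harg : r + (k : ℤ) - l + (j : ℤ) = r - l + (k : ℤ) + (j : ℤ) := by ring
    rw [harg]
    ring
  rw [Finset.sum_congr rfl step3]
  -- Step 4 : reorder the summations from (k, i, j) to (i, j, k)
  rw [Finset.sum_comm]
  exact Finset.sum_congr rfl fun i _ => Finset.sum_comm

end main

section finsumsec

lemma finsum_quad {A : Type*} [AddCommMonoid A] (F : ℤ → ℕ → ℕ → ℕ → A)
    (L : Finset ℤ) (P : ℕ)
    (h0 : ∀ (l : ℤ) (i j k : ℕ), l ∉ L ∨ P < i ∨ P < j ∨ P < k → F l i j k = 0) :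
    (∑ᶠ (l : ℤ) (i : ℕ) (j : ℕ) (k : ℕ), F l i j k) =
      ∑ l ∈ L, ∑ i ∈ Finset.range (P + 1), ∑ j ∈ Finset.range (P + 1),
        ∑ k ∈ Finset.range (P + 1), F l i j k := by
  have e1 : ∀ (l : ℤ) (i j : ℕ), (∑ᶠ k : ℕ, F l i j k) =
      ∑ k ∈ Finset.range (P + 1), F l i j k := by
    intro l i j
    refine finsum_eq_sum_of_support_subset _ fun k hk => ?_
    simp only [Finset.coe_range, Set.mem_Iio]
    by_contra hk'
    exact hk (h0 l i j k (by omega))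
  have e2 : ∀ (l : ℤ) (i : ℕ), (∑ᶠ (j : ℕ) (k : ℕ), F l i j k) =
      ∑ j ∈ Finset.range (P + 1), ∑ k ∈ Finset.range (P + 1), F l i j k := by
    intro l i
    rw [finsum_congr (fun j => e1 l i j)]
    refine finsum_eq_sum_of_support_subset _ fun j hj => ?_
    simp only [Finset.coe_range, Set.mem_Iio]
    by_contra hj'
    exact hj (Finset.sum_eq_zero fun k _ => h0 l i j k (by omega))
  have e3 : ∀ l : ℤ, (∑ᶠ (i : ℕ) (j : ℕ) (k : ℕ), F l i j k) =
      ∑ i ∈ Finset.range (P + 1), ∑ j ∈ Finset.range (P + 1),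
        ∑ k ∈ Finset.range (P + 1), F l i j k := by
    intro l
    rw [finsum_congr (fun i => e2 l i)]
    refine finsum_eq_sum_of_support_subset _ fun i hi => ?_
    simp only [Finset.coe_range, Set.mem_Iio]
    by_contra hi'
    exact hi (Finset.sum_eq_zero fun j _ => Finset.sum_eq_zero fun k _ =>
      h0 l i j k (by omega))
  rw [finsum_congr (fun l => e3 l)]
  refine finsum_eq_sum_of_support_subset _ fun l hl => ?_
  by_contra hl'
  exact hl (Finset.sum_eq_zero fun i _ => Finset.sum_eq_zero fun j _ =>
    Finset.sum_eq_zero fun k _ => h0 l i j k (Or.inl hl'))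

end finsumsec

/-- **Deformed Whitney sum formula for the classes `Q`** (Theorem 6.3, concrete form).
Let `a, b : ℕ → R` with `a 0 = 1` and `(∑ a_k x^k)·(∑ b_k x^k) = 1` in `R⟦x⟧`. For all
`n, m ≥ 1` and every `r : ℤ`, in `R⟦t_1, …, t_{n+m}⟧` one has
`Q_r(t_1,…,t_{n+m}) = ∑_{i,j,k ≥ 0, l ∈ ℤ} Q_{l+i}(t_1,…,t_n) ·
Q_{r-l+k+j}(t_{n+1},…,t_{n+m}) · b_i · b_j · a_k`, the sum being finite since
`Q_s(t_1,…,t_n) = 0` for `s > n` and `Q_s(t_{n+1},…,t_{n+m}) = 0` for `s > m`. -/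
theorem Q_deformed_whitney_sum {R : Type*} [CommRing R] (c : ℕ → ℕ → R)
    (a b : ℕ → R) (ha : a 0 = 1)
    (hab : PowerSeries.mk a * PowerSeries.mk b = 1)
    (n m : ℕ) (hn : 1 ≤ n) (hm : 1 ≤ m) (r : ℤ) :
    (∀ s : ℤ, (n : ℤ) < s →
      QCl c a (Finset.univ.filter fun i : Fin (n + m) => (i : ℕ) < n) s = 0) ∧
    (∀ s : ℤ, (m : ℤ) < s →
      QCl c a (Finset.univ.filter fun i : Fin (n + m) => n ≤ (i : ℕ)) s = 0) ∧
    QCl c a (Finset.univ : Finset (Fin (n + m))) r =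
      ∑ᶠ (l : ℤ) (i : ℕ) (j : ℕ) (k : ℕ),
        (b i * b j * a k) •
          (QCl c a (Finset.univ.filter fun i' : Fin (n + m) => (i' : ℕ) < n)
              (l + (i : ℤ)) *
            QCl c a (Finset.univ.filter fun i' : Fin (n + m) => n ≤ (i' : ℕ))
              (r - l + (k : ℤ) + (j : ℤ))) := by
  set s1 : Finset (Fin (n + m)) := Finset.univ.filter fun i : Fin (n + m) => (i : ℕ) < n
    with hs1
  set s2 : Finset (Fin (n + m)) := Finset.univ.filter fun i : Fin (n + m) => n ≤ (i : ℕ)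
    with hs2
  have hmem1 : ∀ x : Fin (n + m), x ∈ s1 ↔ (x : ℕ) < n := by
    intro x; rw [hs1, Finset.mem_filter]; simp
  have hmem2 : ∀ x : Fin (n + m), x ∈ s2 ↔ n ≤ (x : ℕ) := by
    intro x; rw [hs2, Finset.mem_filter]; simp
  have hdis : Disjoint s1 s2 := by
    rw [Finset.disjoint_left]
    intro x hx hx'
    rw [hmem1] at hx
    rw [hmem2] at hx'
    omega
  have hunion : s1 ∪ s2 = (Finset.univ : Finset (Fin (n + m))) := by
    ext x
    simp only [Finset.mem_union, Finset.mem_univ, iff_true, hmem1, hmem2]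
    omega
  have hc1 : s1.card = n := by
    have h : s1.card = (Finset.univ : Finset (Fin n)).card := by
      refine Finset.card_nbij' (fun x => (⟨(x : ℕ) % n, Nat.mod_lt _ hn⟩ : Fin n))
        (fun y => (⟨(y : ℕ), lt_of_lt_of_le y.isLt (Nat.le_add_right n m)⟩ : Fin (n + m)))
        (fun x _ => Finset.mem_univ _) ?_ ?_ ?_
      · intro y _
        rw [Finset.mem_coe, hmem1]
        exact y.isLt
      · intro x hx
        rw [Finset.mem_coe, hmem1] at hx
        apply Fin.ext
        simp [Nat.mod_eq_of_lt hx]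
      · intro y _
        apply Fin.ext
        simp [Nat.mod_eq_of_lt y.isLt]
    simpa using h
  have hc2 : s2.card = m := by
    have h : s2.card = (Finset.univ : Finset (Fin m)).card := by
      refine Finset.card_nbij' (fun x => (⟨((x : ℕ) - n) % m, Nat.mod_lt _ hm⟩ : Fin m))
        (fun y => (⟨n + (y : ℕ), by omega⟩ : Fin (n + m)))
        (fun x _ => Finset.mem_univ _) ?_ ?_ ?_
      · intro y _
        rw [Finset.mem_coe, hmem2]
        exact Nat.le_add_right n y
      · intro x hx
        rw [Finset.mem_coe, hmem2] at hx
        have hlt : (x : ℕ) - n < m := by omega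
        apply Fin.ext
        simp only [Nat.mod_eq_of_lt hlt]
        omega
      · intro y _
        apply Fin.ext
        have : n + (y : ℕ) - n = (y : ℕ) := by omega
        simp [this, Nat.mod_eq_of_lt y.isLt]
    simpa using h
  refine ⟨fun s hs => qCl_of_gt c a (by rw [hc1]; omega),
    fun s hs => qCl_of_gt c a (by rw [hc2]; omega), ?_⟩
  set P : ℕ := ((n : ℤ) + (m : ℤ) - r).toNat with hP
  rw [← hunion, q_union c a b hab hdis r (P := P) (by rw [hc1, hc2]; omega)]
  refine Eq.symm (finsum_quad _ _ _ ?_)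
  intro l i j k h
  by_cases h1 : l + (i : ℤ) ≤ (s1.card : ℤ)
  · by_cases h2 : r - l + (k : ℤ) + (j : ℤ) ≤ (s2.card : ℤ)
    · exfalso
      rcases h with h | h | h | h
      · exact h (Finset.mem_Icc.mpr ⟨by omega, by omega⟩)
      · omega
      · omega
      · omega
    · rw [qCl_of_gt c a (s := s2) (by omega), mul_zero, smul_zero]
  · rw [qCl_of_gt c a (s := s1) (by omega), zero_mul, smul_zero]
end

section
/- Leading term of the classes Q (the claim in Section 3 that any solution A_r of Problem 3.4, in particular Q_r, has the form c_r^U(ξ) + terms vanishing under the augmentation map): suppose every monomial of F(u,v) − (u + v) has total degree at least 2, i.e., F(u,v) = u + v + ∑_{i,j≥1} c_{ij} u^i v^j. Then for every 0 ≤ r ≤ n, the difference Q_r(t_1,…,t_n) − e_r(t_1,…,t_n) is a power series all of whose monomials in t_1,…,t_n have total degree strictly greater than r, where e_r is the r-th elementary symmetric polynomial. -/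
open Finset

variable {R : Type*} [CommRing R] {σ : Type*} [DecidableEq σ]

section Aux

variable {R : Type*} [CommRing R]

lemma prodX_eq {n : ℕ} (u : Finset (Fin n)) :
    ∏ i ∈ u, (MvPowerSeries.X i : MvPowerSeries (Fin n) R) =
      MvPowerSeries.monomial (R := R) (∑ i ∈ u, Finsupp.single i 1) 1 := by
  induction u using Finset.cons_induction with
  | empty => simp
  | cons a s ha ih =>
      rw [Finset.prod_cons, ih, Finset.sum_cons, MvPowerSeries.X,
        MvPowerSeries.monomial_mul_monomial, one_mul]

lemma indSum_apply {n : ℕ} (u : Finset (Fin n)) (j : Fin n) :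
    (∑ i ∈ u, Finsupp.single i (1 : ℕ)) j = if j ∈ u then 1 else 0 := by
  rw [Finsupp.finset_sum_apply,
    Finset.sum_congr rfl (fun i _ => Finsupp.single_apply)]
  exact Finset.sum_ite_eq' u j (fun _ => 1)

lemma coeff_esymmS {n r : ℕ} (d : Fin n →₀ ℕ) :
    MvPowerSeries.coeff (R := R) d (esymmS R (Finset.univ : Finset (Fin n)) r) =
      if (∑ j, d j) = r ∧ (∀ j, d j ≤ 1) then 1 else 0 := by
  rw [esymmS, map_sum]
  have hco : ∀ u : Finset (Fin n),
      MvPowerSeries.coeff (R := R) d (∏ i ∈ u, (MvPowerSeries.X i : MvPowerSeries (Fin n) R)) =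
        if (∑ i ∈ u, Finsupp.single i 1) = d then 1 else 0 := by
    intro u
    rw [prodX_eq, MvPowerSeries.coeff_monomial]
    simp [eq_comm]
  by_cases hP : (∑ j, d j) = r ∧ (∀ j, d j ≤ 1)
  · rw [if_pos hP]
    obtain ⟨hPr, hP1⟩ := hP
    have hd1 : ∀ j ∈ d.support, d j = 1 := fun j hj =>
      le_antisymm (hP1 j) (Nat.one_le_iff_ne_zero.2 (Finsupp.mem_support_iff.1 hj))
    have hsupp : (∑ i ∈ d.support, Finsupp.single i (1 : ℕ)) = d := by
      ext j
      rw [indSum_apply]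
      by_cases hj : j ∈ d.support
      · rw [if_pos hj, hd1 j hj]
      · rw [if_neg hj]
        exact (Finsupp.notMem_support_iff.1 hj).symm
    have hcard : d.support.card = r := by
      have hss : ∑ j, d j = ∑ j ∈ d.support, d j :=
        (Finset.sum_subset (Finset.subset_univ _)
          (fun x _ hx => Finsupp.notMem_support_iff.1 hx)).symm
      rw [hss, Finset.sum_congr rfl hd1, Finset.sum_const, smul_eq_mul, mul_one] at hPr
      exact hPr
    rw [Finset.sum_eq_single d.support]
    · rw [hco, if_pos hsupp]
    · intro u _ hne
      rw [hco, if_neg]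
      intro h
      apply hne
      ext j
      rw [Finsupp.mem_support_iff, ← h, indSum_apply]
      by_cases hj : j ∈ u <;> simp [hj]
    · intro h
      exact absurd (Finset.mem_powersetCard.2 ⟨Finset.subset_univ _, hcard⟩) h
  · rw [if_neg hP]
    apply Finset.sum_eq_zero
    intro u hu
    rw [hco, if_neg]
    intro h
    apply hP
    have happ : ∀ j, d j = if j ∈ u then 1 else 0 := fun j => by
      rw [← h, indSum_apply]
    constructor
    · have hcard := (Finset.mem_powersetCard.1 hu).2
      calc ∑ j, d j = ∑ j, (if j ∈ u then 1 else 0) :=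
            Finset.sum_congr rfl (fun j _ => happ j)
        _ = u.card := by
            rw [Finset.sum_ite_mem, Finset.univ_inter, Finset.sum_const, smul_eq_mul, mul_one]
        _ = r := hcard
    · intro j
      rw [happ j]
      split <;> omega

lemma key_coeff (c : ℕ → ℕ → R)
    (hc1 : ∀ i : ℕ, c i 0 = if i = 1 then 1 else 0)
    (hc2 : ∀ j : ℕ, c 0 j = if j = 1 then 1 else 0)
    {n : ℕ} (m : ℕ) (d : Fin n →₀ ℕ) (hdm : (∑ j, d j) + m ≤ n) :
    MvPowerSeries.coeff (R := R) d
        (PowerSeries.coeff (R := MvPowerSeries (Fin n) R) m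
          (∏ i ∈ Finset.univ, Fser c i)) =
      if (∑ j, d j) + m = n ∧ (∀ j, d j ≤ 1) then 1 else 0 := by
  classical
  rw [PowerSeries.coeff_prod, map_sum]
  -- the distinguished decompositions
  set l₀ : Fin n →₀ ℕ := Finsupp.equivFunOnFinite.symm (fun i => 1 - d i) with hl₀def
  set D₀ : Fin n →₀ (Fin n →₀ ℕ) :=
    Finsupp.equivFunOnFinite.symm (fun i => Finsupp.single i (d i)) with hD₀def
  have hl₀i : ∀ i, l₀ i = 1 - d i := fun i => rfl
  have hD₀i : ∀ i, D₀ i = Finsupp.single i (d i) := fun i => rfl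
  have hco : ∀ l : Fin n →₀ ℕ,
      MvPowerSeries.coeff (R := R) d (∏ i ∈ Finset.univ,
          PowerSeries.coeff (R := MvPowerSeries (Fin n) R) (l i) (Fser c i)) =
        ∑ D ∈ Finset.univ.finsuppAntidiag d, ∏ i,
          (if D i = Finsupp.single i ((D i) i) then c (l i) ((D i) i) else 0) := by
    intro l
    rw [MvPowerSeries.coeff_prod]
    refine Finset.sum_congr rfl fun D _ => Finset.prod_congr rfl fun i _ => ?_
    have h' : PowerSeries.coeff (l i) (Fser c i) =
        (fun d => if d = Finsupp.single i (d i) then c (l i) (d i) else 0 :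
          MvPowerSeries (Fin n) R) := PowerSeries.coeff_mk _ _
    rw [h']
    rfl
  have hterm : ∀ l ∈ Finset.univ.finsuppAntidiag m,
      ∀ D ∈ Finset.univ.finsuppAntidiag d,
      (∏ i, (if D i = Finsupp.single i ((D i) i) then c (l i) ((D i) i) else 0)) =
        if (((∑ j, d j) + m = n ∧ (∀ j, d j ≤ 1)) ∧ D = D₀ ∧ l = l₀) then 1 else 0 := by
    intro l hl D hD
    obtain ⟨hl1, -⟩ := Finset.mem_finsuppAntidiag.1 hl
    obtain ⟨hD1, -⟩ := Finset.mem_finsuppAntidiag.1 hD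
    by_cases hdiag : ∀ i, D i = Finsupp.single i ((D i) i)
    · -- diagonal case
      have hDd : ∀ j, (D j) j = d j := by
        intro j
        have h1 : d j = ∑ i, (D i) j := by
          rw [← hD1, Finsupp.finset_sum_apply]
        rw [Finset.sum_congr rfl (fun i _ => by rw [hdiag i]),
          Finset.sum_congr rfl (fun i _ => Finsupp.single_apply),
          Finset.sum_ite_eq' Finset.univ j, if_pos (Finset.mem_univ j)] at h1
        exact h1.symm
      have hDD : D = D₀ := by
        ext j j'
        rw [hdiag j, hDd j, hD₀i j]
      have hprod : (∏ i, (if D i = Finsupp.single i ((D i) i)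
          then c (l i) ((D i) i) else 0)) = ∏ i, c (l i) (d i) :=
        Finset.prod_congr rfl fun i _ => by rw [if_pos (hdiag i), hDd i]
      rw [hprod]
      by_cases hz : ∃ i, l i = 0 ∧ d i = 0
      · obtain ⟨i, hli, hdi⟩ := hz
        rw [Finset.prod_eq_zero (Finset.mem_univ i)
          (by rw [hli, hdi, hc1 0]; norm_num), if_neg]
        rintro ⟨-, -, rfl⟩
        rw [hl₀i i, hdi] at hli
        omega
      · push_neg at hz
        have hge : ∀ i, 1 ≤ l i + d i := fun i => by
          rcases Nat.eq_zero_or_pos (l i) with h | h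
          · rcases Nat.eq_zero_or_pos (d i) with h' | h'
            · exact absurd h' (hz i h)
            · omega
          · omega
        have hsum2 : ∑ i, (l i + d i) = m + ∑ j, d j := by
          rw [Finset.sum_add_distrib, hl1]
        have hle : n ≤ m + ∑ j, d j := by
          calc n = ∑ _i : Fin n, 1 := by simp
            _ ≤ ∑ i, (l i + d i) := Finset.sum_le_sum (fun i _ => hge i)
            _ = m + ∑ j, d j := hsum2
        have heq : (∑ j, d j) + m = n := by omega
        have hone : ∀ i, l i + d i = 1 := by
          by_contra h
          push_neg at h
          obtain ⟨i, hi⟩ := h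
          have h2 : 1 < l i + d i := lt_of_le_of_ne (hge i) (Ne.symm hi)
          have h3 : (∑ _i : Fin n, 1) < ∑ i, (l i + d i) :=
            Finset.sum_lt_sum (fun i _ => hge i) ⟨i, Finset.mem_univ i, h2⟩
          rw [hsum2] at h3
          simp only [Finset.sum_const, Finset.card_univ, Fintype.card_fin,
            smul_eq_mul, mul_one] at h3
          omega
        have hd1 : ∀ j, d j ≤ 1 := fun j => by have := hone j; omega
        have hll : l = l₀ := by
          ext i
          rw [hl₀i i]
          have := hone i
          omega
        rw [if_pos ⟨⟨heq, hd1⟩, hDD, hll⟩]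
        apply Finset.prod_eq_one
        intro i _
        have hi := hone i
        have : d i = 0 ∨ d i = 1 := by omega
        rcases this with h | h
        · have hli : l i = 1 := by omega
          rw [h, hli, hc1 1]
          norm_num
        · have hli : l i = 0 := by omega
          rw [h, hli, hc2 1]
          norm_num
    · push_neg at hdiag
      obtain ⟨i, hi⟩ := hdiag
      rw [Finset.prod_eq_zero (Finset.mem_univ i)
        (show (if D i = Finsupp.single i ((D i) i) then c (l i) ((D i) i) else 0) = 0
          from if_neg hi), if_neg]
      rintro ⟨-, rfl, -⟩
      apply hi
      rw [hD₀i i, Finsupp.single_eq_same]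
  rw [Finset.sum_congr rfl (fun l _ => hco l),
    Finset.sum_congr rfl (fun l hl => Finset.sum_congr rfl (fun D hD => hterm l hl D hD))]
  by_cases hP : (∑ j, d j) + m = n ∧ (∀ j, d j ≤ 1)
  · rw [if_pos hP]
    have hD₀mem : D₀ ∈ Finset.univ.finsuppAntidiag d := by
      rw [Finset.mem_finsuppAntidiag]
      refine ⟨?_, Finset.subset_univ _⟩
      ext j
      rw [Finsupp.finset_sum_apply,
        Finset.sum_congr rfl (fun i _ => by rw [hD₀i i]),
        Finset.sum_congr rfl (fun i _ => Finsupp.single_apply),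
        Finset.sum_ite_eq' Finset.univ j, if_pos (Finset.mem_univ j)]
    have hl₀mem : l₀ ∈ Finset.univ.finsuppAntidiag m := by
      rw [Finset.mem_finsuppAntidiag]
      refine ⟨?_, Finset.subset_univ _⟩
      show (∑ i, l₀ i) = m
      obtain ⟨heq, hd1⟩ := hP
      have h1 : ∑ i, (l₀ i + d i) = (∑ i, l₀ i) + ∑ j, d j := Finset.sum_add_distrib
      have h2 : ∑ i, (l₀ i + d i) = ∑ _i : Fin n, 1 :=
        Finset.sum_congr rfl fun i _ => by rw [hl₀i i]; have := hd1 i; omega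
      simp only [Finset.sum_const, Finset.card_univ, Fintype.card_fin,
        smul_eq_mul, mul_one] at h2
      omega
    have hinner : ∀ l ∈ Finset.univ.finsuppAntidiag m,
        (∑ D ∈ Finset.univ.finsuppAntidiag d,
          (if (((∑ j, d j) + m = n ∧ (∀ j, d j ≤ 1)) ∧ D = D₀ ∧ l = l₀)
            then (1 : R) else 0)) = if l = l₀ then 1 else 0 := by
      intro l _
      have hre : ∀ D : Fin n →₀ (Fin n →₀ ℕ),
          (if (((∑ j, d j) + m = n ∧ (∀ j, d j ≤ 1)) ∧ D = D₀ ∧ l = l₀)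
            then (1 : R) else 0) =
            if D = D₀ then (if l = l₀ then (1 : R) else 0) else 0 := by
        intro D
        by_cases h1 : D = D₀ <;> by_cases h2 : l = l₀ <;> simp [h1, h2, hP.1, hP.2]
      rw [Finset.sum_congr rfl (fun D _ => hre D),
        Finset.sum_ite_eq' (Finset.univ.finsuppAntidiag d) D₀
          (fun _ => if l = l₀ then (1 : R) else 0), if_pos hD₀mem]
    rw [Finset.sum_congr rfl hinner,
      Finset.sum_ite_eq' (Finset.univ.finsuppAntidiag m) l₀ (fun _ => (1 : R)),
      if_pos hl₀mem]
  · rw [if_neg hP]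
    refine Finset.sum_eq_zero fun l _ => Finset.sum_eq_zero fun D _ => ?_
    rw [if_neg]
    rintro ⟨h, -⟩
    exact hP h

end Aux

/-- **Leading term of the classes `Q`** (Section 3: every solution of Problem 3.4, in
particular `Q_r`, has the form `c_r^U(ξ) + …` where the dots vanish under the
augmentation map). Suppose `F(u,v) = u + v + ∑_{i,j ≥ 1} c_{ij} u^i v^j`, i.e. every
monomial of `F(u,v) - (u + v)` has total degree at least `2` (equivalently
`c i 0 = δ_{i,1}` and `c 0 j = δ_{j,1}`), and `a 0 = 1`. Then for every `0 ≤ r ≤ n`,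
the difference `Q_r(t_1,…,t_n) - e_r(t_1,…,t_n)` is a power series all of whose
monomials have total degree strictly greater than `r`, where `e_r` is the `r`-th
elementary symmetric polynomial. -/
theorem Q_leading_term {R : Type*} [CommRing R] (c : ℕ → ℕ → R)
    (hc1 : ∀ i : ℕ, c i 0 = if i = 1 then 1 else 0)
    (hc2 : ∀ j : ℕ, c 0 j = if j = 1 then 1 else 0)
    (a : ℕ → R) (ha0 : a 0 = 1)
    (n : ℕ) (hn : 1 ≤ n) :
    ∀ r : ℕ, r ≤ n → ∀ d : Fin n →₀ ℕ, (d.sum fun _ e => e) ≤ r →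
      MvPowerSeries.coeff (R := R) d
        (QCl c a (Finset.univ : Finset (Fin n)) (r : ℤ) -
          esymmS R (Finset.univ : Finset (Fin n)) r) = 0 := by
  intro r hr d hd
  have hsum : (d.sum fun _ e => e) = ∑ j, d j := Finsupp.sum_fintype _ _ fun _ => rfl
  rw [hsum] at hd
  have hcard : (Finset.univ : Finset (Fin n)).card = n := by simp
  rw [map_sub, coeff_esymmS]
  rw [QCl, hcard, if_pos (by exact_mod_cast hr)]
  have htn : ((n : ℤ) - (r : ℤ)).toNat = n - r := by omega
  rw [htn, map_sum]
  have hPhi : ∀ k ∈ Finset.range (n - r + 1),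
      MvPowerSeries.coeff (R := R) d
          (MvPowerSeries.C (σ := Fin n) (R := R) (a k) * PhiCl c Finset.univ ((r : ℕ) + (k : ℤ))) =
        a k * (if (∑ j, d j) + (n - r - k) = n ∧ (∀ j, d j ≤ 1) then 1 else 0) := by
    intro k hk
    have hkn : k ≤ n - r := Nat.lt_succ_iff.mp (Finset.mem_range.1 hk)
    rw [MvPowerSeries.coeff_C_mul, PhiCl, hcard, if_pos (by push_cast; omega)]
    have h2 : ((n : ℤ) - ((r : ℕ) + (k : ℤ))).toNat = n - r - k := by push_cast; omega
    rw [h2, key_coeff c hc1 hc2 _ d (by omega)]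
  rw [Finset.sum_congr rfl hPhi]
  have h0 : ∀ k ∈ Finset.range (n - r + 1), k ≠ 0 →
      a k * (if (∑ j, d j) + (n - r - k) = n ∧ (∀ j, d j ≤ 1) then (1 : R) else 0) = 0 := by
    intro k hk hk0
    have hkn : k ≤ n - r := Nat.lt_succ_iff.mp (Finset.mem_range.1 hk)
    rw [if_neg, mul_zero]
    rintro ⟨h1, -⟩
    omega
  have h0' : (0 : ℕ) ∉ Finset.range (n - r + 1) →
      a 0 * (if (∑ j, d j) + (n - r - 0) = n ∧ (∀ j, d j ≤ 1) then (1 : R) else 0) = 0 := by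
    intro h
    exact absurd (Finset.mem_range.2 (by omega)) h
  rw [Finset.sum_eq_single 0 h0 h0', ha0, one_mul]
  have hiff : ((∑ j, d j) + (n - r - 0) = n ∧ (∀ j, d j ≤ 1)) ↔
      ((∑ j, d j) = r ∧ (∀ j, d j ≤ 1)) := by
    constructor <;> rintro ⟨h1, h2⟩ <;> exact ⟨by omega, h2⟩
  rw [if_congr hiff rfl rfl, sub_self]
end
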